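/- Let n ≥ 3 be odd, let r > 0, z = √(1 + r²), and Ω ∈ ℝ. The curves q_i(t) = (r cos(Ωt + 2π(i−1)/n), r sin(Ωt + 2π(i−1)/n), z), i = 1,…,n, form a solution of the curved n-body equations on H² if and only if Ω² = 2 Σ_{j=1}^{(n−1)/2} (1 − cos(2jπ/n)) / ((r² cos(2jπ/n) − 1 − r²)² − 1)^{3/2}. -/

import Mathlib

open Real
open Fin.NatCast

noncomputable section

/-- Lorentz inner product on `ℝ^{2,1} = ℝ × ℝ × ℝ`: `a⊙b = a₁b₁ + a₂b₂ − a₃b₃`. -/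
def ldot3 (a b : ℝ × ℝ × ℝ) : ℝ := a.1 * b.1 + a.2.1 * b.2.1 - a.2.2 * b.2.2

/-- The curved `n`-body problem on the hyperbolic plane `H²`, realized as the upper sheet
`{x² + y² − z² = −1, z > 0}` of the hyperboloid in `ℝ³` with the Lorentz product
(curvature `−1`), equal masses `mᵢ = 1`:  the curves stay on the upper sheet and satisfy
`q̈ᵢ = Σ_{j≠i} (qⱼ + (qᵢ⊙qⱼ) qᵢ)/((qᵢ⊙qⱼ)² − 1)^{3/2} + (q̇ᵢ⊙q̇ᵢ) qᵢ`. -/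
def IsHyperbolicSolution (n : ℕ) (q : Fin n → ℝ → ℝ × ℝ × ℝ) : Prop :=
  (∀ i t, ldot3 (q i t) (q i t) = -1 ∧ 0 < (q i t).2.2) ∧
  ∀ i t, deriv (deriv (q i)) t =
    (∑ j ∈ Finset.univ.erase i,
      (1 / (ldot3 (q i t) (q j t) ^ 2 - 1) ^ ((3 : ℝ) / 2)) •
        (q j t + ldot3 (q i t) (q j t) • q i t))
    + ldot3 (deriv (q i) t) (deriv (q i) t) • q i t

/-- The regular `n`-gon configuration rotating with angular velocity `Ω` on the circle of
radius `r` at height `z = √(1 + r²)` on the hyperboloid (bodies indexed by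
`i = 0,…,n−1`, corresponding to `i = 1,…,n` in the paper). -/
def polygonH (n : ℕ) (r Ω : ℝ) (i : Fin n) (t : ℝ) : ℝ × ℝ × ℝ :=
  (r * Real.cos (Ω * t + 2 * π * ((i : ℕ) : ℝ) / n),
   r * Real.sin (Ω * t + 2 * π * ((i : ℕ) : ℝ) / n),
   Real.sqrt (1 + r ^ 2))


lemma aux_hasDerivAt (r a b z0 t : ℝ) :
    HasDerivAt (fun s => ((r * Real.cos (a * s + b), r * Real.sin (a * s + b), z0) : ℝ × ℝ × ℝ))
      (-(r * a) * Real.sin (a * t + b), r * a * Real.cos (a * t + b), (0:ℝ)) t := by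
  have h1 : HasDerivAt (fun s : ℝ => a * s + b) a t := by
    simpa using ((hasDerivAt_id t).const_mul a).add_const b
  have hc : HasDerivAt (fun s => r * Real.cos (a * s + b)) (-(r * a) * Real.sin (a * t + b)) t := by
    have := h1.cos.const_mul r
    exact this.congr_deriv (by ring)
  have hs : HasDerivAt (fun s => r * Real.sin (a * s + b)) (r * a * Real.cos (a * t + b)) t := by
    have := h1.sin.const_mul r
    exact this.congr_deriv (by ring)
  exact hc.prodMk (hs.prodMk (hasDerivAt_const t z0))

lemma aux_hasDerivAt2 (r a b t : ℝ) :
    HasDerivAt (fun s => ((-(r * a) * Real.sin (a * s + b), r * a * Real.cos (a * s + b), (0:ℝ)) : ℝ × ℝ × ℝ))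
      (-(r * a ^ 2) * Real.cos (a * t + b), -(r * a ^ 2) * Real.sin (a * t + b), (0:ℝ)) t := by
  have h1 : HasDerivAt (fun s : ℝ => a * s + b) a t := by
    simpa using ((hasDerivAt_id t).const_mul a).add_const b
  have hc : HasDerivAt (fun s => -(r * a) * Real.sin (a * s + b)) (-(r * a ^ 2) * Real.cos (a * t + b)) t := by
    have := h1.sin.const_mul (-(r * a))
    exact this.congr_deriv (by ring)
  have hs : HasDerivAt (fun s => r * a * Real.cos (a * s + b)) (-(r * a ^ 2) * Real.sin (a * t + b)) t := by
    have := h1.cos.const_mul (r * a)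
    exact this.congr_deriv (by ring)
  exact hc.prodMk (hs.prodMk (hasDerivAt_const t 0))

lemma aux_ldot (r z α β : ℝ) (hz : z ^ 2 = 1 + r ^ 2) :
    ldot3 (r * Real.cos α, r * Real.sin α, z) (r * Real.cos β, r * Real.sin β, z)
      = r ^ 2 * Real.cos (α - β) - 1 - r ^ 2 := by
  simp only [ldot3, Real.cos_sub]
  linear_combination -hz

lemma aux_cos_lt_one (n : ℕ) (hn : 0 < n) (k : ℤ) (h : ¬ (n : ℤ) ∣ k) :
    Real.cos (2 * π * (k : ℝ) / n) < 1 := by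
  rcases lt_or_eq_of_le (Real.cos_le_one (2 * π * (k : ℝ) / n)) with h1 | h1
  · exact h1
  · exfalso
    obtain ⟨j, hj⟩ := (Real.cos_eq_one_iff _).mp h1
    apply h
    refine ⟨j, ?_⟩
    have hπ : (2 * π) ≠ 0 := by positivity
    have hnR : (n : ℝ) ≠ 0 := Nat.cast_ne_zero.mpr hn.ne'
    have h2 : (2 * π) * (k : ℝ) = (2 * π) * ((n : ℝ) * j) := by
      field_simp at hj
      rw [← hj]; ring
    have h3 := mul_left_cancel₀ hπ h2
    exact_mod_cast h3

lemma aux_denom_pos (r c : ℝ) (hr : 0 < r) (hc1 : c < 1) :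
    0 < (r ^ 2 * c - 1 - r ^ 2) ^ 2 - 1 := by
  have hu : 0 < r ^ 2 * (1 - c) := mul_pos (by positivity) (by linarith)
  nlinarith [hu]

lemma aux_sum_reflect (m : ℕ) (f : ℕ → ℝ) :
    ∑ k ∈ Finset.Icc 1 (2 * m), f k
      = ∑ k ∈ Finset.Icc 1 m, (f k + f (2 * m + 1 - k)) := by
  rw [Finset.sum_add_distrib]
  have h1 : Finset.Icc 1 (2 * m) = Finset.Icc 1 m ∪ Finset.Icc (m + 1) (2 * m) := by
    ext x; simp only [Finset.mem_Icc, Finset.mem_union]; omega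
  have hd : Disjoint (Finset.Icc 1 m) (Finset.Icc (m + 1) (2 * m)) := by
    rw [Finset.disjoint_left]; intro x hx hx'
    simp only [Finset.mem_Icc] at hx hx'; omega
  rw [h1, Finset.sum_union hd]
  congr 1
  refine Finset.sum_nbij' (fun k => 2 * m + 1 - k) (fun k => 2 * m + 1 - k) ?_ ?_ ?_ ?_ ?_
  all_goals intro a ha <;> simp only [Finset.mem_Icc] at * <;> try omega
  congr 1; omega

lemma aux_angle_cos (n : ℕ) (hn : 0 < n) (x : ℝ) (a : ℕ) :
    Real.cos (x + 2 * π * ((a % n : ℕ) : ℝ) / n) = Real.cos (x + 2 * π * (a : ℝ) / n) := by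
  have hnR : (n : ℝ) ≠ 0 := Nat.cast_ne_zero.mpr hn.ne'
  have h : (a : ℝ) = n * ((a / n : ℕ) : ℝ) + ((a % n : ℕ) : ℝ) := by
    exact_mod_cast (Nat.div_add_mod a n).symm
  have key : x + 2 * π * ((a % n : ℕ) : ℝ) / n
      = (x + 2 * π * (a : ℝ) / n) - ((a / n : ℕ) : ℝ) * (2 * π) := by
    field_simp
    linear_combination (-2 * π) * h
  rw [key]
  have h2 := Real.cos_sub_int_mul_two_pi (x + 2 * π * (a : ℝ) / n) ((a / n : ℕ) : ℤ)
  push_cast at h2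
  exact h2

lemma aux_angle_sin (n : ℕ) (hn : 0 < n) (x : ℝ) (a : ℕ) :
    Real.sin (x + 2 * π * ((a % n : ℕ) : ℝ) / n) = Real.sin (x + 2 * π * (a : ℝ) / n) := by
  have hnR : (n : ℝ) ≠ 0 := Nat.cast_ne_zero.mpr hn.ne'
  have h : (a : ℝ) = n * ((a / n : ℕ) : ℝ) + ((a % n : ℕ) : ℝ) := by
    exact_mod_cast (Nat.div_add_mod a n).symm
  have key : x + 2 * π * ((a % n : ℕ) : ℝ) / n
      = (x + 2 * π * (a : ℝ) / n) - ((a / n : ℕ) : ℝ) * (2 * π) := by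
    field_simp
    linear_combination (-2 * π) * h
  rw [key]
  have h2 := Real.sin_sub_int_mul_two_pi (x + 2 * π * (a : ℝ) / n) ((a / n : ℕ) : ℤ)
  push_cast at h2
  exact h2

lemma aux_reindex (n : ℕ) [NeZero n] (i : Fin n) (F : Fin n → ℝ × ℝ × ℝ) :
    ∑ j ∈ Finset.univ.erase i, F j
      = ∑ k ∈ Finset.Icc 1 (n - 1), F (i + (k : Fin n)) := by
  have hn : 0 < n := Nat.pos_of_ne_zero (NeZero.ne n)
  refine Finset.sum_nbij' (i := fun j => ((j - i : Fin n) : ℕ)) (j := fun (k : ℕ) => i + (k : Fin n)) ?_ ?_ ?_ ?_ ?_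
  · intro j hj
    simp only [Finset.mem_erase, Finset.mem_univ, and_true] at hj
    simp only [Finset.mem_Icc]
    have h1 : (j - i : Fin n) ≠ 0 := sub_ne_zero.mpr hj
    have h2 : ((j - i : Fin n) : ℕ) < n := (j - i).isLt
    have h3 : ((j - i : Fin n) : ℕ) ≠ 0 := fun h => h1 (Fin.ext h)
    omega
  · intro k hk
    simp only [Finset.mem_Icc] at hk
    simp only [Finset.mem_erase, Finset.mem_univ, and_true]
    intro h
    have : ((k : Fin n) : ℕ) = 0 := by
      have : (k : Fin n) = 0 := by
        have := congrArg (fun x => x - i) h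
        simpa [add_sub_cancel_left] using this
      simp [this]
    rw [Fin.val_natCast, Nat.mod_eq_of_lt (by omega)] at this
    omega
  · intro j hj
    simp [Fin.cast_val_eq_self]
  · intro k hk
    simp only [Finset.mem_Icc] at hk
    show ((i + (k : Fin n) - i : Fin n) : ℕ) = k
    rw [add_sub_cancel_left, Fin.val_natCast, Nat.mod_eq_of_lt (by omega)]
  · intro j hj
    congr 1
    symm
    simp [Fin.cast_val_eq_self]

/-- For odd `n ≥ 3` and `r > 0`, the rotating regular `n`-gon at height `z = √(1 + r²)`
on `H²` is a solution of the curved `n`-body equations if and only if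
`Ω² = 2 Σ_{j=1}^{(n−1)/2} (1 − cos(2jπ/n)) / ((r² cos(2jπ/n) − 1 − r²)² − 1)^{3/2}`. -/
theorem polygon_relative_equilibrium_iff_hyperbolic_odd
    (n : ℕ) (hn : 3 ≤ n) (hodd : Odd n) (r : ℝ) (hr0 : 0 < r) (Ω : ℝ) :
    IsHyperbolicSolution n (polygonH n r Ω) ↔
      Ω ^ 2 = 2 * ∑ j ∈ Finset.Icc 1 ((n - 1) / 2),
        (1 - Real.cos (2 * (j : ℝ) * π / n)) /
          ((r ^ 2 * Real.cos (2 * (j : ℝ) * π / n) - 1 - r ^ 2) ^ 2 - 1) ^ ((3 : ℝ) / 2) := by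
  haveI : NeZero n := ⟨by omega⟩
  obtain ⟨m, hm⟩ := hodd
  have hm1 : 1 ≤ m := by omega
  have hm2 : (n - 1) / 2 = m := by omega
  have hn1 : (0:ℕ) < n := by omega
  have hnR : (n : ℝ) ≠ 0 := Nat.cast_ne_zero.mpr (by omega)
  have hz2 : (Real.sqrt (1 + r ^ 2)) ^ 2 = 1 + r ^ 2 := Real.sq_sqrt (by positivity)
  have hzpos : 0 < Real.sqrt (1 + r ^ 2) := Real.sqrt_pos.mpr (by positivity)
  set T := ∑ k ∈ Finset.Icc 1 (n - 1),
      1 / ((r ^ 2 * Real.cos (2 * π * (k : ℝ) / n) - 1 - r ^ 2) ^ 2 - 1) ^ ((3:ℝ)/2)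
        * (1 - Real.cos (2 * π * (k : ℝ) / n)) with hTdef
  -- cos < 1 on the index range
  have hCklt : ∀ k : ℕ, 1 ≤ k → k ≤ n - 1 → Real.cos (2 * π * (k : ℝ) / n) < 1 := by
    intro k hk1 hk2
    have hnd : ¬ (n : ℤ) ∣ (k : ℤ) := by
      intro hd
      have := Int.le_of_dvd (by exact_mod_cast hk1) hd
      omega
    have := aux_cos_lt_one n hn1 (k : ℤ) hnd
    simpa using this
  -- reflection identities
  have hcast : ∀ k : ℕ, k ≤ n → ((n - k : ℕ) : ℝ) = (n : ℝ) - (k : ℝ) := by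
    intro k hk; push_cast [Nat.cast_sub hk]; ring
  have hcosrefl : ∀ k : ℕ, k ≤ n →
      Real.cos (2 * π * ((n - k : ℕ) : ℝ) / n) = Real.cos (2 * π * (k : ℝ) / n) := by
    intro k hk
    rw [hcast k hk, show 2 * π * ((n:ℝ) - (k:ℝ)) / n = 2 * π - 2 * π * (k:ℝ) / n by
      field_simp]
    exact Real.cos_two_pi_sub _
  have hsinrefl : ∀ k : ℕ, k ≤ n →
      Real.sin (2 * π * ((n - k : ℕ) : ℝ) / n) = -Real.sin (2 * π * (k : ℝ) / n) := by
    intro k hk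
    rw [hcast k hk, show 2 * π * ((n:ℝ) - (k:ℝ)) / n = 2 * π - 2 * π * (k:ℝ) / n by
      field_simp]
    exact Real.sin_two_pi_sub _
  -- the sine sum vanishes
  have hSsin : ∑ k ∈ Finset.Icc 1 (n - 1),
      1 / ((r ^ 2 * Real.cos (2 * π * (k : ℝ) / n) - 1 - r ^ 2) ^ 2 - 1) ^ ((3:ℝ)/2)
        * Real.sin (2 * π * (k : ℝ) / n) = 0 := by
    rw [show n - 1 = 2 * m by omega, aux_sum_reflect m _]
    apply Finset.sum_eq_zero
    intro k hk
    simp only [Finset.mem_Icc] at hk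
    have hnk : 2 * m + 1 - k = n - k := by omega
    have hkn : k ≤ n := by omega
    rw [hnk, hcosrefl k hkn, hsinrefl k hkn]
    ring
  -- T equals twice the half-range sum (the RHS of the theorem)
  have hRHS : 2 * ∑ j ∈ Finset.Icc 1 ((n - 1) / 2),
      (1 - Real.cos (2 * (j : ℝ) * π / n)) /
        ((r ^ 2 * Real.cos (2 * (j : ℝ) * π / n) - 1 - r ^ 2) ^ 2 - 1) ^ ((3 : ℝ) / 2) = T := by
    rw [hm2]
    have hargs : ∀ j : ℕ, 2 * (j : ℝ) * π / (n : ℝ) = 2 * π * (j : ℝ) / n := fun j => by ring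
    simp only [hargs]
    rw [hTdef, show n - 1 = 2 * m by omega, aux_sum_reflect m _, Finset.mul_sum]
    apply Finset.sum_congr rfl
    intro k hk
    simp only [Finset.mem_Icc] at hk
    have hnk : 2 * m + 1 - k = n - k := by omega
    have hkn : k ≤ n := by omega
    rw [hnk, hcosrefl k hkn]
    ring
  -- derivatives
  have hd1 : ∀ i : Fin n, deriv (polygonH n r Ω i) = fun t =>
      ((-(r * Ω) * Real.sin (Ω * t + 2 * π * ((i : ℕ) : ℝ) / n),
        r * Ω * Real.cos (Ω * t + 2 * π * ((i : ℕ) : ℝ) / n), (0:ℝ)) : ℝ × ℝ × ℝ) := by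
    intro i
    funext t
    exact (aux_hasDerivAt r Ω (2 * π * ((i : ℕ) : ℝ) / n) (Real.sqrt (1 + r ^ 2)) t).deriv
  have hd2 : ∀ (i : Fin n) (t : ℝ), deriv (deriv (polygonH n r Ω i)) t =
      (-(r * Ω ^ 2) * Real.cos (Ω * t + 2 * π * ((i : ℕ) : ℝ) / n),
       -(r * Ω ^ 2) * Real.sin (Ω * t + 2 * π * ((i : ℕ) : ℝ) / n), (0:ℝ)) := by
    intro i t
    rw [hd1 i]
    exact (aux_hasDerivAt2 r Ω (2 * π * ((i : ℕ) : ℝ) / n) t).deriv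
  have hvel : ∀ (i : Fin n) (t : ℝ),
      ldot3 (deriv (polygonH n r Ω i) t) (deriv (polygonH n r Ω i) t) = r ^ 2 * Ω ^ 2 := by
    intro i t
    rw [hd1 i]
    simp only [ldot3]
    have h := Real.sin_sq_add_cos_sq (Ω * t + 2 * π * ((i : ℕ) : ℝ) / n)
    linear_combination (r ^ 2 * Ω ^ 2) * h
  -- the key sum computation
  have hkey : ∀ (i : Fin n) (t : ℝ),
      (∑ j ∈ Finset.univ.erase i,
        (1 / (ldot3 (polygonH n r Ω i t) (polygonH n r Ω j t) ^ 2 - 1) ^ ((3 : ℝ) / 2)) •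
          (polygonH n r Ω j t
            + ldot3 (polygonH n r Ω i t) (polygonH n r Ω j t) • polygonH n r Ω i t))
      = ((-(r * (1 + r ^ 2) * T)) * Real.cos (Ω * t + 2 * π * ((i : ℕ) : ℝ) / n),
         (-(r * (1 + r ^ 2) * T)) * Real.sin (Ω * t + 2 * π * ((i : ℕ) : ℝ) / n),
         -(Real.sqrt (1 + r ^ 2) * r ^ 2 * T)) := by
    intro i t
    rw [aux_reindex n i _]
    have hterm : ∀ k ∈ Finset.Icc 1 (n - 1),
        (1 / (ldot3 (polygonH n r Ω i t) (polygonH n r Ω (i + (k : Fin n)) t) ^ 2 - 1) ^ ((3 : ℝ) / 2)) •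
          (polygonH n r Ω (i + (k : Fin n)) t
            + ldot3 (polygonH n r Ω i t) (polygonH n r Ω (i + (k : Fin n)) t) • polygonH n r Ω i t)
        = ((-(r * (1 + r ^ 2) * Real.cos (Ω * t + 2 * π * ((i : ℕ) : ℝ) / n))) * (1 / ((r ^ 2 * Real.cos (2 * π * (k : ℝ) / n) - 1 - r ^ 2) ^ 2 - 1) ^ ((3:ℝ)/2) * (1 - Real.cos (2 * π * (k : ℝ) / n))) + (-(r * Real.sin (Ω * t + 2 * π * ((i : ℕ) : ℝ) / n))) * (1 / ((r ^ 2 * Real.cos (2 * π * (k : ℝ) / n) - 1 - r ^ 2) ^ 2 - 1) ^ ((3:ℝ)/2) * Real.sin (2 * π * (k : ℝ) / n)),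
           (-(r * (1 + r ^ 2) * Real.sin (Ω * t + 2 * π * ((i : ℕ) : ℝ) / n))) * (1 / ((r ^ 2 * Real.cos (2 * π * (k : ℝ) / n) - 1 - r ^ 2) ^ 2 - 1) ^ ((3:ℝ)/2) * (1 - Real.cos (2 * π * (k : ℝ) / n))) + (r * Real.cos (Ω * t + 2 * π * ((i : ℕ) : ℝ) / n)) * (1 / ((r ^ 2 * Real.cos (2 * π * (k : ℝ) / n) - 1 - r ^ 2) ^ 2 - 1) ^ ((3:ℝ)/2) * Real.sin (2 * π * (k : ℝ) / n)),
           (-(Real.sqrt (1 + r ^ 2) * r ^ 2)) * (1 / ((r ^ 2 * Real.cos (2 * π * (k : ℝ) / n) - 1 - r ^ 2) ^ 2 - 1) ^ ((3:ℝ)/2) * (1 - Real.cos (2 * π * (k : ℝ) / n)))) := by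
      intro k hk
      simp only [Finset.mem_Icc] at hk
      have hjval : ((i + (k : Fin n) : Fin n) : ℕ) = ((i : ℕ) + k) % n := by
        have h1 : ((i + (k : Fin n) : Fin n) : ℕ) = ((i : ℕ) + ((k : Fin n) : ℕ)) % n :=
          Fin.val_add _ _
        have h2 : ((k : Fin n) : ℕ) = k % n := by simp [Fin.val_natCast]
        rw [h1, h2]
        conv_rhs => rw [Nat.add_mod]
        rw [Nat.mod_eq_of_lt i.isLt]
      have hq : polygonH n r Ω (i + (k : Fin n)) t =
          (r * Real.cos ((Ω * t + 2 * π * ((i : ℕ) : ℝ) / n) + 2 * π * (k : ℝ) / n),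
           r * Real.sin ((Ω * t + 2 * π * ((i : ℕ) : ℝ) / n) + 2 * π * (k : ℝ) / n),
           Real.sqrt (1 + r ^ 2)) := by
        show (r * Real.cos (Ω * t + 2 * π * (((i + (k : Fin n) : Fin n) : ℕ) : ℝ) / n),
              r * Real.sin (Ω * t + 2 * π * (((i + (k : Fin n) : Fin n) : ℕ) : ℝ) / n),
              Real.sqrt (1 + r ^ 2)) = _
        rw [hjval]
        rw [aux_angle_cos n hn1 (Ω * t) ((i : ℕ) + k), aux_angle_sin n hn1 (Ω * t) ((i : ℕ) + k)]
        have harg : Ω * t + 2 * π * (((i : ℕ) + k : ℕ) : ℝ) / n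
            = (Ω * t + 2 * π * ((i : ℕ) : ℝ) / n) + 2 * π * (k : ℝ) / n := by
          push_cast; ring
        rw [harg]
      have hl : ldot3 (polygonH n r Ω i t) (polygonH n r Ω (i + (k : Fin n)) t)
          = r ^ 2 * Real.cos (2 * π * (k : ℝ) / n) - 1 - r ^ 2 := by
        rw [hq]
        rw [show polygonH n r Ω i t =
            (r * Real.cos (Ω * t + 2 * π * ((i : ℕ) : ℝ) / n),
             r * Real.sin (Ω * t + 2 * π * ((i : ℕ) : ℝ) / n),
             Real.sqrt (1 + r ^ 2)) from rfl]
        rw [aux_ldot r (Real.sqrt (1 + r ^ 2)) _ _ hz2]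
        rw [show (Ω * t + 2 * π * ((i : ℕ) : ℝ) / n)
              - ((Ω * t + 2 * π * ((i : ℕ) : ℝ) / n) + 2 * π * (k : ℝ) / n)
            = -(2 * π * (k : ℝ) / n) by ring, Real.cos_neg]
      rw [hl, hq]
      rw [show polygonH n r Ω i t =
          (r * Real.cos (Ω * t + 2 * π * ((i : ℕ) : ℝ) / n),
           r * Real.sin (Ω * t + 2 * π * ((i : ℕ) : ℝ) / n),
           Real.sqrt (1 + r ^ 2)) from rfl]
      simp only [Prod.smul_mk, Prod.mk_add_mk, smul_eq_mul, Prod.mk.injEq]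
      refine ⟨?_, ?_, ?_⟩
      · rw [Real.cos_add]; ring
      · rw [Real.sin_add]; ring
      · ring
    rw [Finset.sum_congr rfl hterm]
    refine Prod.ext ?_ (Prod.ext ?_ ?_)
    · rw [Prod.fst_sum]
      simp only
      rw [Finset.sum_add_distrib, ← Finset.mul_sum, ← Finset.mul_sum, hSsin, mul_zero, add_zero,
        ← hTdef]
      ring
    · rw [Prod.snd_sum, Prod.fst_sum]
      simp only
      rw [Finset.sum_add_distrib, ← Finset.mul_sum, ← Finset.mul_sum, hSsin, mul_zero, add_zero,
        ← hTdef]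
      ring
    · rw [Prod.snd_sum, Prod.snd_sum]
      simp only
      rw [← Finset.mul_sum, ← hTdef]
      ring
  -- the equation of motion at (i,t) is equivalent to Ω² = T
  have hODE : ∀ (i : Fin n) (t : ℝ),
      (deriv (deriv (polygonH n r Ω i)) t =
        (∑ j ∈ Finset.univ.erase i,
          (1 / (ldot3 (polygonH n r Ω i t) (polygonH n r Ω j t) ^ 2 - 1) ^ ((3 : ℝ) / 2)) •
            (polygonH n r Ω j t
              + ldot3 (polygonH n r Ω i t) (polygonH n r Ω j t) • polygonH n r Ω i t))
        + ldot3 (deriv (polygonH n r Ω i) t) (deriv (polygonH n r Ω i) t) • polygonH n r Ω i t)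
      ↔ Ω ^ 2 = T := by
    intro i t
    rw [hd2 i t, hkey i t, hvel i t]
    rw [show polygonH n r Ω i t =
        (r * Real.cos (Ω * t + 2 * π * ((i : ℕ) : ℝ) / n),
         r * Real.sin (Ω * t + 2 * π * ((i : ℕ) : ℝ) / n),
         Real.sqrt (1 + r ^ 2)) from rfl]
    simp only [Prod.smul_mk, Prod.mk_add_mk, smul_eq_mul, Prod.mk.injEq]
    constructor
    · rintro ⟨-, -, h3⟩
      have h4 : Real.sqrt (1 + r ^ 2) * r ^ 2 * (Ω ^ 2 - T) = 0 := by linear_combination -h3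
      rcases mul_eq_zero.mp h4 with h5 | h5
      · exact absurd h5 (by positivity)
      · linarith
    · intro h
      refine ⟨?_, ?_, ?_⟩ <;> rw [h] <;> ring
  -- assemble
  unfold IsHyperbolicSolution
  constructor
  · rintro ⟨hcon, hode⟩
    have h0 : Ω ^ 2 = T := (hODE ⟨0, by omega⟩ 0).mp (hode ⟨0, by omega⟩ 0)
    rw [h0]
    exact hRHS.symm
  · intro h
    have h0 : Ω ^ 2 = T := by rw [h]; exact hRHS
    refine ⟨?_, fun i t => (hODE i t).mpr h0⟩
    intro i t
    constructor
    · rw [show polygonH n r Ω i t =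
          (r * Real.cos (Ω * t + 2 * π * ((i : ℕ) : ℝ) / n),
           r * Real.sin (Ω * t + 2 * π * ((i : ℕ) : ℝ) / n),
           Real.sqrt (1 + r ^ 2)) from rfl]
      simp only [ldot3]
      have h := Real.sin_sq_add_cos_sq (Ω * t + 2 * π * ((i : ℕ) : ℝ) / n)
      linear_combination r ^ 2 * h - hz2
    · exact hzpos
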